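/- Let K be a compact subset of a Banach space X, φ : ℕ → ℝ nonnegative, and γ_n = 2^{φ(n)}. Suppose d_n^{γ_n}(K)_X = 0 for some n. Then for every integer k > φ(n), one has ε_{nk}(K)_X ≤ 6·2^{φ(n)−k}. -/

import Mathlib

/-- `N` is a norm on `ℝ^n`. -/
def IsNorm {n : ℕ} (N : (Fin n → ℝ) → ℝ) : Prop :=
  (∀ y, N y = 0 ↔ y = 0) ∧ (∀ (a : ℝ) (y), N (a • y) = |a| * N y) ∧
    (∀ y z, N (y + z) ≤ N y + N z)

variable {X : Type*} [NormedAddCommGroup X] [NormedSpace ℝ X] [CompleteSpace X]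

/-- The fixed Lipschitz width `d^γ(K, Y_n)_X` for the norm `N` on `ℝ^n`. -/
noncomputable def fixedLipWidth {n : ℕ} (K : Set X) (N : (Fin n → ℝ) → ℝ) (γ : ℝ) : ℝ :=
  ⨅ L : {L : (Fin n → ℝ) → X //
      ∀ y y', N y ≤ 1 → N y' ≤ 1 → ‖L y - L y'‖ ≤ γ * N (y - y')},
    ⨆ f : K, ⨅ y : {y : Fin n → ℝ // N y ≤ 1}, ‖(f : X) - L.1 y.1‖

/-- The Lipschitz width `d_n^γ(K)_X`. -/
noncomputable def lipWidth (K : Set X) (n : ℕ) (γ : ℝ) : ℝ :=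
  ⨅ N : {N : (Fin n → ℝ) → ℝ // IsNorm N}, fixedLipWidth K N.1 γ

/-- The entropy number `ε_n(K)_X`. -/
noncomputable def entropyNum (K : Set X) (n : ℕ) : ℝ :=
  sInf {ε : ℝ | 0 < ε ∧ ∃ g : Fin (2 ^ n) → X, K ⊆ ⋃ j, Metric.closedBall (g j) ε}

/-- The Chebyshev radius of `K`. -/
noncomputable def chebRad (K : Set X) : ℝ :=
  ⨅ g : X, ⨆ f : K, ‖g - (f : X)‖

open Metric Set MeasureTheory Module
open scoped ENNReal NNReal

section Covering

variable {E : Type*} [NormedAddCommGroup E] [NormedSpace ℝ E] [FiniteDimensional ℝ E]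

/-- Any `δ`-separated subset of the unit ball has cardinality at most `(1 + 2/δ)^dim`. -/
lemma sep_card (δ : ℝ) (hδ : 0 < δ) (s : Finset E) (hs : ∀ c ∈ s, ‖c‖ ≤ 1)
    (h : ∀ c ∈ s, ∀ d ∈ s, c ≠ d → δ < ‖c - d‖) :
    (s.card : ℝ) ≤ (1 + 2 / δ) ^ finrank ℝ E := by
  borelize E
  let μ : Measure E := Measure.addHaar
  have hδ2 : (0 : ℝ) < δ / 2 := by linarith
  have hρ : (0 : ℝ) < 1 + δ / 2 := by linarith
  set A := ⋃ c ∈ s, ball (c : E) (δ / 2) with hA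
  have D : Set.Pairwise (s : Set E) (Function.onFun Disjoint fun c => ball (c : E) (δ / 2)) := by
    rintro c hc d hd hcd
    apply ball_disjoint_ball
    rw [dist_eq_norm]
    have := h c hc d hd hcd
    linarith
  have A_subset : A ⊆ ball (0 : E) (1 + δ / 2) := by
    refine iUnion₂_subset fun x hx => ?_
    apply ball_subset_ball'
    rw [dist_zero_right]
    have := hs x hx
    linarith
  have I :
      (s.card : ℝ≥0∞) * ENNReal.ofReal ((δ / 2) ^ finrank ℝ E) * μ (ball 0 1) ≤
        ENNReal.ofReal ((1 + δ / 2) ^ finrank ℝ E) * μ (ball 0 1) :=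
    calc
      (s.card : ℝ≥0∞) * ENNReal.ofReal ((δ / 2) ^ finrank ℝ E) * μ (ball 0 1) = μ A := by
        rw [hA, measure_biUnion_finset D fun c _ => measurableSet_ball]
        simp only [μ.addHaar_ball_of_pos _ hδ2]
        simp only [Finset.sum_const, nsmul_eq_mul, mul_assoc]
      _ ≤ μ (ball (0 : E) (1 + δ / 2)) := measure_mono A_subset
      _ = ENNReal.ofReal ((1 + δ / 2) ^ finrank ℝ E) * μ (ball 0 1) := by
        simp only [μ.addHaar_ball_of_pos _ hρ]
  have J : (s.card : ℝ≥0∞) * ENNReal.ofReal ((δ / 2) ^ finrank ℝ E) ≤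
      ENNReal.ofReal ((1 + δ / 2) ^ finrank ℝ E) :=
    (ENNReal.mul_le_mul_iff_left (measure_ball_pos _ _ zero_lt_one).ne' measure_ball_lt_top.ne).1 I
  have K : (s.card : ℝ) * (δ / 2) ^ finrank ℝ E ≤ (1 + δ / 2) ^ finrank ℝ E := by
    have := ENNReal.toReal_le_of_le_ofReal (pow_nonneg hρ.le _) J
    rw [ENNReal.toReal_mul, ENNReal.toReal_ofReal (pow_nonneg hδ2.le _)] at this
    simpa using this
  have hq : (1 + δ / 2) / (δ / 2) = 1 + 2 / δ := by
    field_simp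
    ring
  calc (s.card : ℝ) ≤ (1 + δ / 2) ^ finrank ℝ E / (δ / 2) ^ finrank ℝ E := by
        rw [le_div_iff₀ (by positivity)]
        exact K
    _ = (1 + 2 / δ) ^ finrank ℝ E := by rw [← div_pow, hq]

/-- Quantitative covering of the unit ball in a finite-dimensional normed space. -/
lemma exists_covering (δ : ℝ) (hδ : 0 < δ) :
    ∃ s : Finset E, (s.card : ℝ) ≤ (1 + 2 / δ) ^ finrank ℝ E ∧ (∀ c ∈ s, ‖c‖ ≤ 1) ∧
      ∀ y : E, ‖y‖ ≤ 1 → ∃ c ∈ s, ‖y - c‖ ≤ δ := by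
  classical
  set 𝒮 : Set ℕ := {m | ∃ s : Finset E, (∀ c ∈ s, ‖c‖ ≤ 1) ∧
    (∀ c ∈ s, ∀ d ∈ s, c ≠ d → δ < ‖c - d‖) ∧ s.card = m} with h𝒮
  have h0 : (0 : ℕ) ∈ 𝒮 := ⟨∅, by simp⟩
  have hbdd : BddAbove 𝒮 := by
    refine ⟨⌊(1 + 2 / δ) ^ finrank ℝ E⌋₊, ?_⟩
    rintro m ⟨s, hs1, hs2, rfl⟩
    exact Nat.le_floor (sep_card δ hδ s hs1 hs2)
  obtain ⟨s, hs1, hs2, hscard⟩ := Nat.sSup_mem ⟨0, h0⟩ hbdd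
  refine ⟨s, ?_, hs1, ?_⟩
  · exact sep_card δ hδ s hs1 hs2
  · intro y hy
    by_contra! hcon
    have hys : y ∉ s := by
      intro hys
      have := hcon y hys
      simp only [sub_self, norm_zero] at this
      linarith
    have hmem : s.card + 1 ∈ 𝒮 := by
      refine ⟨insert y s, ?_, ?_, by rw [Finset.card_insert_of_notMem hys]⟩
      · intro c hc
        rcases Finset.mem_insert.1 hc with rfl | hc
        · exact hy
        · exact hs1 c hc
      · intro c hc d hd hcd
        rcases Finset.mem_insert.1 hc with hcy | hc <;>
          rcases Finset.mem_insert.1 hd with hdy | hd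
        · exact absurd (hcy.trans hdy.symm) hcd
        · rw [hcy]
          exact hcon d hd
        · rw [hdy, norm_sub_rev]
          exact hcon c hc
        · exact hs2 c hc d hd hcd
    have := le_csSup hbdd hmem
    rw [hscard] at this
    omega

end Covering

/-- Type synonym for `ℝ^n` carrying the norm `N`. -/
def NS {n : ℕ} (_N : (Fin n → ℝ) → ℝ) : Type := Fin n → ℝ

instance {n : ℕ} {N : (Fin n → ℝ) → ℝ} : AddCommGroup (NS N) :=
  inferInstanceAs (AddCommGroup (Fin n → ℝ))

lemma IsNorm.nonneg {n : ℕ} {N : (Fin n → ℝ) → ℝ} (hN : IsNorm N) (y : Fin n → ℝ) :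
    0 ≤ N y := by
  have h1 : N (-y) = N y := by
    have := hN.2.1 (-1) y
    simpa using this
  have h2 := hN.2.2 y (-y)
  rw [add_neg_cancel, (hN.1 0).2 rfl, h1] at h2
  linarith

lemma IsNorm.zero {n : ℕ} {N : (Fin n → ℝ) → ℝ} (hN : IsNorm N) : N 0 = 0 :=
  (hN.1 0).2 rfl

/-- Quantitative covering of the unit ball of an arbitrary norm on `ℝ^n`. -/
lemma norm_cover {n : ℕ} {N : (Fin n → ℝ) → ℝ} (hN : IsNorm N) (δ : ℝ) (hδ : 0 < δ) :
    ∃ s : Finset (Fin n → ℝ), (s.card : ℝ) ≤ (1 + 2 / δ) ^ n ∧ (∀ c ∈ s, N c ≤ 1) ∧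
      ∀ y, N y ≤ 1 → ∃ c ∈ s, N (y - c) ≤ δ := by
  letI : NormedAddCommGroup (NS N) :=
    AddGroupNorm.toNormedAddCommGroup
      { toFun := N
        map_zero' := hN.zero
        add_le' := hN.2.2
        neg' := fun y => by have := hN.2.1 (-1) (show Fin n → ℝ from y); rw [neg_one_smul, abs_neg, abs_one, one_mul] at this; exact this
        eq_zero_of_map_eq_zero' := fun y hy => (hN.1 y).1 hy }
  letI : NormedSpace ℝ (NS N) :=
    { (inferInstance : Module ℝ (Fin n → ℝ)) with
      norm_smul_le := fun a y => le_of_eq (hN.2.1 a y) }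
  haveI : FiniteDimensional ℝ (NS N) :=
    inferInstanceAs (FiniteDimensional ℝ (Fin n → ℝ))
  have hrank : Module.finrank ℝ (NS N) = n := Module.finrank_fin_fun ℝ
  obtain ⟨s, hcard, hs1, hs2⟩ := exists_covering (E := NS N) δ hδ
  rw [hrank] at hcard
  exact ⟨s, hcard, hs1, hs2⟩

lemma ball_nonempty {n : ℕ} {N : (Fin n → ℝ) → ℝ} (hN : IsNorm N) :
    Nonempty {y : Fin n → ℝ // N y ≤ 1} :=
  ⟨⟨0, by rw [hN.zero]; exact zero_le_one⟩⟩

instance instIsNormNonempty {n : ℕ} : Nonempty {N : (Fin n → ℝ) → ℝ // IsNorm N} :=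
  ⟨⟨fun y => ‖y‖, fun y => norm_eq_zero, fun a y => by
    show ‖a • y‖ = |a| * ‖y‖
    rw [norm_smul, Real.norm_eq_abs], fun y z => norm_add_le y z⟩⟩

/-- if `d_n^{2^{φ(n)}}(K)_X = 0` then `ε_{nk}(K)_X ≤ 6 · 2^{φ(n) - k}`
for every integer `k > φ(n)`. -/
theorem entropy_bound_of_lipWidth_eq_zero (K : Set X) (hK : IsCompact K)
    (φ : ℕ → ℝ) (hφ : ∀ n, 0 ≤ φ n) (n : ℕ)
    (h0 : lipWidth K n ((2 : ℝ) ^ φ n) = 0) :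
    ∀ k : ℕ, φ n < k → entropyNum K (n * k) ≤ 6 * (2 : ℝ) ^ (φ n - (k : ℝ)) := by
  intro k hk
  have hk1 : 1 ≤ k := by
    rcases Nat.eq_zero_or_pos k with rfl | h
    · norm_num at hk
      linarith [hφ n]
    · exact h
  set γ : ℝ := (2 : ℝ) ^ φ n with hγ
  set εK : ℝ := (2 : ℝ) ^ (φ n - (k : ℝ)) with hεK
  have hεKpos : 0 < εK := Real.rpow_pos_of_pos two_pos _
  have hγpos : 0 < γ := Real.rpow_pos_of_pos two_pos _
  -- extract a norm N with small fixed Lipschitz width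
  unfold lipWidth at h0
  have h1 : (⨅ N : {N : (Fin n → ℝ) → ℝ // IsNorm N}, fixedLipWidth K N.1 γ) < εK := by
    rw [h0]; exact hεKpos
  obtain ⟨⟨N, hN⟩, hNlt⟩ := exists_lt_of_ciInf_lt h1
  haveI := ball_nonempty hN
  -- extract a Lipschitz map L
  unfold fixedLipWidth at hNlt
  have hLne : Nonempty {L : (Fin n → ℝ) → X //
      ∀ y y', N y ≤ 1 → N y' ≤ 1 → ‖L y - L y'‖ ≤ γ * N (y - y')} :=
    ⟨⟨fun _ => 0, fun y y' _ _ => by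
      simpa using mul_nonneg hγpos.le (hN.nonneg (y - y'))⟩⟩
  obtain ⟨L, hLlt⟩ := exists_lt_of_ciInf_lt hNlt
  -- bddAbove for the sup over K
  obtain ⟨C, hC⟩ := hK.isBounded.exists_norm_le
  have hbdd : BddAbove (Set.range fun f : K =>
      ⨅ y : {y : Fin n → ℝ // N y ≤ 1}, ‖(f : X) - L.1 y.1‖) := by
    refine ⟨C + ‖L.1 0‖, ?_⟩
    rintro _ ⟨f, rfl⟩
    have hbb : BddBelow (Set.range fun y : {y : Fin n → ℝ // N y ≤ 1} =>
        ‖(f : X) - L.1 y.1‖) := ⟨0, by rintro _ ⟨y, rfl⟩; positivity⟩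
    refine (ciInf_le hbb ⟨0, by rw [hN.zero]; exact zero_le_one⟩).trans ?_
    calc ‖(f : X) - L.1 0‖ ≤ ‖(f : X)‖ + ‖L.1 0‖ := norm_sub_le _ _
      _ ≤ C + ‖L.1 0‖ := by have := hC f f.2; linarith
  -- the covering of the unit ball of N
  set δ : ℝ := 4 * (2 : ℝ) ^ (-(k : ℝ)) with hδdef
  have hδpos : 0 < δ := by positivity
  have hP : (2 : ℝ) ^ (-(k : ℝ)) = ((2 : ℝ) ^ (k : ℝ))⁻¹ := by
    rw [Real.rpow_neg two_pos.le]
  have hPval : (2 : ℝ) ^ ((k : ℕ) : ℝ) = (2 : ℝ) ^ (k : ℕ) := Real.rpow_natCast 2 k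
  have hPge : (2 : ℝ) ≤ (2 : ℝ) ^ (k : ℝ) := by
    calc (2 : ℝ) = (2 : ℝ) ^ (1 : ℝ) := (Real.rpow_one 2).symm
      _ ≤ (2 : ℝ) ^ (k : ℝ) := Real.rpow_le_rpow_of_exponent_le one_le_two
          (by exact_mod_cast hk1)
  have hbase : 1 + 2 / δ ≤ (2 : ℝ) ^ (k : ℝ) := by
    have hPpos : (0 : ℝ) < (2 : ℝ) ^ (k : ℝ) := Real.rpow_pos_of_pos two_pos _
    rw [hδdef, hP]
    rw [div_eq_mul_inv, mul_inv, inv_inv]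
    have : (2 : ℝ) * ((4 : ℝ)⁻¹ * (2 : ℝ) ^ (k : ℝ)) = (2 : ℝ) ^ (k : ℝ) / 2 := by ring
    rw [this]
    linarith
  obtain ⟨s, hscard, hs1, hs2⟩ := norm_cover hN δ hδpos
  -- card bound
  have hM : s.card ≤ 2 ^ (n * k) := by
    have h2 : (s.card : ℝ) ≤ ((2 : ℝ) ^ (k : ℝ)) ^ n :=
      hscard.trans (pow_le_pow_left₀ (by positivity) hbase n)
    rw [hPval, ← pow_mul, mul_comm k n] at h2
    exact_mod_cast h2
  -- build the centers
  obtain ⟨c₀, hc₀s, -⟩ := hs2 0 (by rw [hN.zero]; exact zero_le_one)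
  set M := 2 ^ (n * k) with hMdef
  set e : Fin M → (Fin n → ℝ) := fun j =>
    if h : (j : ℕ) < s.card then (s.equivFin.symm ⟨(j : ℕ), h⟩ : (Fin n → ℝ)) else c₀ with he
  have hesurj : ∀ c ∈ s, ∃ j : Fin M, e j = c := by
    intro c hc
    refine ⟨⟨(s.equivFin ⟨c, hc⟩ : ℕ), lt_of_lt_of_le (s.equivFin ⟨c, hc⟩).2 hM⟩, ?_⟩
    rw [he]
    dsimp only
    rw [dif_pos (s.equivFin ⟨c, hc⟩).2]
    have h2 : s.equivFin.symm ⟨((s.equivFin ⟨c, hc⟩ : Fin s.card) : ℕ),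
        (s.equivFin ⟨c, hc⟩).2⟩ = ⟨c, hc⟩ := by
      rw [Fin.eta]
      exact s.equivFin.symm_apply_apply _
    exact congrArg Subtype.val h2
  -- the covering of K
  have hγδ : γ * δ = 4 * εK := by
    rw [hγ, hδdef, hεK, sub_eq_add_neg, Real.rpow_add two_pos]
    ring
  have hmem : (6 * (2 : ℝ) ^ (φ n - (k : ℝ))) ∈
      {ε : ℝ | 0 < ε ∧ ∃ g : Fin (2 ^ (n * k)) → X, K ⊆ ⋃ j, Metric.closedBall (g j) ε} := by
    refine ⟨by positivity, fun j => L.1 (e j), fun x hx => ?_⟩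
    have hfin : (⨅ y : {y : Fin n → ℝ // N y ≤ 1}, ‖(x : X) - L.1 y.1‖) < εK :=
      lt_of_le_of_lt (le_ciSup hbdd ⟨x, hx⟩) hLlt
    obtain ⟨y, hy⟩ := exists_lt_of_ciInf_lt hfin
    obtain ⟨c, hcs, hyc⟩ := hs2 y.1 y.2
    obtain ⟨j, hj⟩ := hesurj c hcs
    refine Set.mem_iUnion.2 ⟨j, ?_⟩
    simp only [Metric.mem_closedBall, dist_eq_norm]
    rw [hj]
    calc ‖x - L.1 c‖ ≤ ‖x - L.1 y.1‖ + ‖L.1 y.1 - L.1 c‖ := by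
          have := norm_add_le (x - L.1 y.1) (L.1 y.1 - L.1 c)
          simpa using this
      _ ≤ εK + γ * N (y.1 - c) := by
          have h1 := L.2 y.1 c y.2 (hs1 c hcs)
          linarith [hy.le]
      _ ≤ εK + γ * δ := by nlinarith [hN.nonneg (y.1 - c), hγpos]
      _ = 5 * εK := by rw [hγδ]; ring
      _ ≤ 6 * (2 : ℝ) ^ (φ n - (k : ℝ)) := by rw [← hεK]; linarith
  refine csInf_le ⟨0, ?_⟩ hmem
  rintro ε ⟨hε, -⟩
  exact hε.le
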